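/- Let ω : ℝ → ℝ be continuous with |ω(t)| ≤ K(1 + t²) for all t ∈ ℝ and some K > 0, and suppose ω(t)/t → 0 as t → +∞. Define O_s := ω(s) − ∫_{−∞}^s e^{r−s} ω(r) dr for s ∈ ℝ. Then (1/t) ∫_0^t O_s ds → 0 as t → +∞. -/

import Mathlib

open MeasureTheory Real Filter

lemma aux_int (c : ℝ) : IntegrableOn (fun r : ℝ => Real.exp r * (1 + r ^ 2)) (Set.Iic c) := by
  have hd : ∀ r : ℝ, HasDerivAt (fun r : ℝ => Real.exp r * (r ^ 2 - 2 * r + 3))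
      (Real.exp r * (1 + r ^ 2)) r := by
    intro r
    have h := (Real.hasDerivAt_exp r).mul
      (((hasDerivAt_pow 2 r).sub ((hasDerivAt_id r).const_mul 2)).add_const 3)
    convert h using 1
    · rfl
    · rfl
    · rfl
    simp
    ring
  have hcont : Continuous (fun r : ℝ => Real.exp r * (1 + r ^ 2)) := by continuity
  refine integrableOn_Iic_of_intervalIntegral_norm_bounded
    (Real.exp c * (c ^ 2 - 2 * c + 3)) c (fun y => hcont.integrableOn_Ioc) tendsto_id ?_
  filter_upwards with y
  have h1 : ∀ x : ℝ, ‖Real.exp x * (1 + x ^ 2)‖ = Real.exp x * (1 + x ^ 2) := fun x =>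
    norm_of_nonneg (by positivity)
  simp_rw [h1]
  rw [intervalIntegral.integral_eq_sub_of_hasDerivAt (fun x _ => hd x)
    (hcont.intervalIntegrable _ _)]
  simp only [id_eq]
  nlinarith [mul_pos (Real.exp_pos y) (show (0:ℝ) < y ^ 2 - 2 * y + 3 by nlinarith [sq_nonneg (y - 1)])]

/-- The time average of the Ornstein–Uhlenbeck process vanishes at `+∞`. -/
theorem stmt_4 (ω : ℝ → ℝ) (hω : Continuous ω) (K : ℝ) (hK : 0 < K)
    (hbd : ∀ t : ℝ, |ω t| ≤ K * (1 + t ^ 2))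
    (hsub : Tendsto (fun t : ℝ => ω t / t) atTop (nhds 0))
    (O : ℝ → ℝ)
    (hO : ∀ s : ℝ, O s = ω s - ∫ r in Set.Iic s, Real.exp (r - s) * ω r) :
    Tendsto (fun t : ℝ => (1 / t) * ∫ s in (0:ℝ)..t, O s) atTop (nhds 0) := by
  have hgc : Continuous (fun r : ℝ => Real.exp r * ω r) := Real.continuous_exp.mul hω
  have hgint : ∀ t : ℝ, IntegrableOn (fun r : ℝ => Real.exp r * ω r) (Set.Iic t) := by
    intro t
    refine ((aux_int t).const_mul K).mono' (hgc.aestronglyMeasurable.restrict) ?_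
    filter_upwards with r
    have h1 : ‖Real.exp r * ω r‖ = Real.exp r * |ω r| := by
      rw [norm_eq_abs, abs_mul, abs_of_pos (Real.exp_pos r)]
    rw [h1]
    have := hbd r
    nlinarith [Real.exp_pos r]
  set F : ℝ → ℝ := fun s => ∫ r in Set.Iic s, Real.exp r * ω r with hFdef
  set I : ℝ → ℝ := fun s => Real.exp (-s) * F s with hIdef
  have hIeq : ∀ s : ℝ, (∫ r in Set.Iic s, Real.exp (r - s) * ω r) = I s := by
    intro s
    have h1 : (fun r : ℝ => Real.exp (r - s) * ω r)
        = fun r : ℝ => Real.exp (-s) * (Real.exp r * ω r) := by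
      funext r
      rw [Real.exp_sub, Real.exp_neg]
      ring
    rw [h1, MeasureTheory.integral_const_mul]
  have hF : ∀ s : ℝ, HasDerivAt F (Real.exp s * ω s) s := by
    intro s
    have h1 : ∀ u : ℝ, F u = F s + ∫ r in s..u, Real.exp r * ω r := by
      intro u
      rw [← intervalIntegral.integral_Iic_sub_Iic (hgint s) (hgint u)]
      ring
    have h2 : HasDerivAt (fun u : ℝ => F s + ∫ r in s..u, Real.exp r * ω r)
        (Real.exp s * ω s) s :=
      (intervalIntegral.integral_hasDerivAt_right (hgc.intervalIntegrable s s)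
        (hgc.stronglyMeasurableAtFilter volume (nhds s)) hgc.continuousAt).const_add (F s)
    rw [show F = fun u : ℝ => F s + ∫ r in s..u, Real.exp r * ω r from funext h1]
    exact h2
  have hI : ∀ s : ℝ, HasDerivAt I (O s) s := by
    intro s
    have he : HasDerivAt (fun u : ℝ => Real.exp (-u)) (-Real.exp (-s)) s := by
      have := (Real.hasDerivAt_exp (-s)).comp s (hasDerivAt_neg s)
      convert this using 1
      · rfl
      · rfl
      · rfl
      ring
    have h := he.mul (hF s)
    have e1 : Real.exp (-s) * Real.exp s = 1 := by rw [← Real.exp_add]; simp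
    convert h using 1
    · rfl
    · rfl
    · rfl
    rw [hO s, hIeq s, hIdef]
    simp only
    have e2 : Real.exp (-s) * (Real.exp s * ω s) = ω s := by rw [← mul_assoc, e1, one_mul]
    linarith [e2]
  have hIcont : Continuous I :=
    continuous_iff_continuousAt.2 fun s => (hI s).differentiableAt.continuousAt
  have hOcont : Continuous O := by
    have hOe : O = fun s => ω s - I s := funext fun s => by rw [hO s, hIeq s]
    rw [hOe]
    exact hω.sub hIcont
  have hInt : ∀ t : ℝ, (∫ s in (0:ℝ)..t, O s) = I t - I 0 := fun t =>
    intervalIntegral.integral_eq_sub_of_hasDerivAt (fun s _ => hI s)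
      (hOcont.intervalIntegrable _ _)
  have key : Tendsto (fun t : ℝ => (1 / t) * I t) atTop (nhds 0) := by
    rw [Metric.tendsto_nhds]
    intro ε hε
    have hev : ∀ᶠ r in atTop, dist (ω r / r) 0 < ε / 3 :=
      Metric.tendsto_nhds.mp hsub (ε / 3) (by linarith)
    obtain ⟨M₀, hM₀⟩ := eventually_atTop.1 hev
    set M : ℝ := max M₀ 1 with hMdef
    have hM1 : (1:ℝ) ≤ M := le_max_right _ _
    have hωM : ∀ r : ℝ, M ≤ r → |ω r| ≤ ε / 3 * r := by
      intro r hr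
      have hrpos : (0:ℝ) < r := lt_of_lt_of_le one_pos (hM1.trans hr)
      have h := hM₀ r ((le_max_left _ _).trans hr)
      rw [Real.dist_eq, sub_zero, abs_div, abs_of_pos hrpos, div_lt_iff₀ hrpos] at h
      linarith
    set C : ℝ := ∫ r in Set.Iic M, |Real.exp r * ω r| with hCdef
    have habs : ∀ t : ℝ, IntegrableOn (fun r : ℝ => |Real.exp r * ω r|) (Set.Iic t) :=
      fun t => (hgint t).abs
    have hstep : ∀ t : ℝ, M ≤ t → |I t| ≤ Real.exp (-t) * C + ε / 3 * t := by
      intro t ht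
      have htpos : (0:ℝ) < t := lt_of_lt_of_le one_pos (hM1.trans ht)
      have h1 : |F t| ≤ ∫ r in Set.Iic t, |Real.exp r * ω r| := by
        have h1' := MeasureTheory.norm_integral_le_integral_norm
          (μ := volume.restrict (Set.Iic t)) (fun r : ℝ => Real.exp r * ω r)
        simp only [Real.norm_eq_abs] at h1'
        exact h1'
      have hsplit : (∫ r in Set.Iic t, |Real.exp r * ω r|)
          = C + ∫ r in M..t, |Real.exp r * ω r| := by
        rw [← intervalIntegral.integral_Iic_sub_Iic (habs M) (habs t)]
        ring
      have h2 : (∫ r in M..t, |Real.exp r * ω r|)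
          ≤ ∫ r in M..t, Real.exp r * (ε / 3 * t) := by
        apply intervalIntegral.integral_mono_on ht
          (hgc.abs.intervalIntegrable _ _)
          ((Real.continuous_exp.mul continuous_const).intervalIntegrable _ _)
        intro x hx
        have hωx := hωM x hx.1
        have hxt : x ≤ t := hx.2
        have h3 : |Real.exp x * ω x| = Real.exp x * |ω x| := by
          rw [abs_mul, abs_of_pos (Real.exp_pos x)]
        rw [h3]
        have hεx : ε / 3 * x ≤ ε / 3 * t := by nlinarith
        show Real.exp x * |ω x| ≤ Real.exp x * (ε / 3 * t)
        nlinarith [Real.exp_pos x]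
      have h3 : (∫ r in M..t, Real.exp r * (ε / 3 * t))
          = (Real.exp t - Real.exp M) * (ε / 3 * t) := by
        rw [intervalIntegral.integral_mul_const, integral_exp]
      have e1 : Real.exp (-t) * Real.exp t = 1 := by rw [← Real.exp_add]; simp
      have h4 : Real.exp (-t) * |F t|
          ≤ Real.exp (-t) * (C + (Real.exp t - Real.exp M) * (ε / 3 * t)) :=
        mul_le_mul_of_nonneg_left (by linarith) (Real.exp_pos _).le
      have h5 : (0:ℝ) ≤ Real.exp (-t) * Real.exp M * (ε / 3 * t) := by positivity
      have hIabs : |I t| = Real.exp (-t) * |F t| := by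
        rw [hIdef]
        simp only
        rw [abs_mul, abs_of_pos (Real.exp_pos _)]
      rw [hIabs]
      have h6 : Real.exp (-t) * (C + (Real.exp t - Real.exp M) * (ε / 3 * t))
          = Real.exp (-t) * C + ε / 3 * t - Real.exp (-t) * Real.exp M * (ε / 3 * t) := by
        linear_combination (ε / 3 * t) * e1
      linarith [h4, h5, h6]
    have hC0 : Tendsto (fun t : ℝ => Real.exp (-t) * C) atTop (nhds 0) := by
      simpa using Real.tendsto_exp_neg_atTop_nhds_zero.mul_const C
    have hev2 : ∀ᶠ t in atTop, Real.exp (-t) * C < ε / 3 :=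
      hC0.eventually (gt_mem_nhds (by linarith))
    filter_upwards [eventually_ge_atTop M, eventually_ge_atTop (1:ℝ), hev2] with t htM ht1 hexp
    rw [Real.dist_eq, sub_zero]
    have ht0 : (0:ℝ) < t := lt_of_lt_of_le one_pos ht1
    have h := hstep t htM
    have hIabs2 : |1 / t * I t| = 1 / t * |I t| := by
      rw [abs_mul, abs_of_pos (by positivity : (0:ℝ) < 1 / t)]
    rw [hIabs2]
    have hb : |I t| ≤ 2 * (ε / 3) * t := by nlinarith
    calc 1 / t * |I t| ≤ 1 / t * (2 * (ε / 3) * t) :=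
          mul_le_mul_of_nonneg_left hb (by positivity)
      _ = 2 * (ε / 3) := by field_simp
      _ < ε := by linarith
  have key0 : Tendsto (fun t : ℝ => (1 / t) * I 0) atTop (nhds 0) := by
    simpa [one_div] using tendsto_inv_atTop_zero.mul_const (I 0)
  refine Tendsto.congr (fun t => ?_) (by simpa using key.sub key0)
  rw [hInt t]
  ring
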